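/- If G is a pointed graph with pebbling number ♯G = p, then there are at least p vertices v in G admitting a v-critical assignment for Peb(G); in particular, G has at least p vertices. -/

import Mathlib

attribute [local instance] Classical.propDecidable

/-- A clause: a finite set of literals, a literal being a variable with a sign. -/
abbrev Clause := Finset (ℕ × Bool)

/-- A total truth assignment satisfies a clause if it makes some literal true. -/
def clauseSat (a : ℕ → Bool) (C : Clause) : Prop :=
  ∃ l ∈ C, (if l.2 then a l.1 else !(a l.1)) = true

/-- A set of clauses is unsatisfiable (contradictory). -/
def Unsat (S : Set Clause) : Prop := ∀ a : ℕ → Bool, ¬ ∀ C ∈ S, clauseSat a C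

/-- A directed graph with a designated sink vertex. -/
structure PGraph where
  verts : Finset ℕ
  edges : Finset (ℕ × ℕ)
  sink : ℕ

def edgeRel (G : PGraph) (u v : ℕ) : Prop := (u, v) ∈ G.edges

def Reach (G : PGraph) (u v : ℕ) : Prop := Relation.ReflTransGen (edgeRel G) u v

noncomputable def preds (G : PGraph) (v : ℕ) : Finset ℕ :=
  (G.edges.filter (fun e => e.2 = v)).image Prod.fst

/-- A pointed graph: a DAG whose edges join vertices, indegrees at most 2, with a
unique sink belonging to the graph and reachable from every vertex. -/
def IsPointed (G : PGraph) : Prop :=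
  G.sink ∈ G.verts ∧
  (∀ e ∈ G.edges, e.1 ∈ G.verts ∧ e.2 ∈ G.verts) ∧
  (∀ v, ¬ Relation.TransGen (edgeRel G) v v) ∧
  (∀ v ∈ G.verts, (preds G v).card ≤ 2) ∧
  (∀ v ∈ G.verts, Reach G v G.sink)

/-- The clause of the pebbling formula associated with a vertex: the negations of its
predecessors, together with the vertex itself positively (omitted at the sink, which
plays the role of ⊥). Sources thus get unit clauses. -/
noncomputable def ClauseOf (G : PGraph) (v : ℕ) : Clause :=
  ((preds G v).image (fun u => (u, false))) ∪
    (if v = G.sink then (∅ : Clause) else {(v, true)})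

/-- The pebbling formula Peb(G). -/
noncomputable def Peb (G : PGraph) : Set Clause := (fun v => ClauseOf G v) '' ↑G.verts

/-- A legal move of the pebbling game: place a pebble on a vertex all of whose
predecessors are pebbled (for sources this allows placement at any time), or remove
a pebble from any vertex. -/
def PebStep (G : PGraph) (C D : Finset ℕ) : Prop :=
  (∃ v ∈ G.verts, preds G v ⊆ C ∧ D = insert v C) ∨ (∃ v, D = C.erase v)

/-- A (successful) strategy for the pebbling game on G: a sequence of configurations
starting from the empty configuration, each obtained from the previous by a legal
move, ending with a pebble on the sink. -/
def IsStrategy (G : PGraph) (L : List (Finset ℕ)) : Prop :=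
  L.head? = some ∅ ∧ (∃ C, L.getLast? = some C ∧ G.sink ∈ C) ∧ List.Chain' (PebStep G) L

/-- The cost of a strategy: the maximum number of pebbles simultaneously on the graph. -/
def cost (L : List (Finset ℕ)) : ℕ := (L.map Finset.card).foldr max 0

/-- The pebbling number ♯G: the minimum cost of a strategy for the pebbling game on G. -/
noncomputable def pebNum (G : PGraph) : ℕ :=
  sInf { p | ∃ L : List (Finset ℕ), IsStrategy G L ∧ cost L ≤ p }

/-- A v-critical assignment for Peb(G). -/
def IsCritical (G : PGraph) (v : ℕ) (a : ℕ → Bool) : Prop :=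
  ¬ clauseSat a (ClauseOf G v) ∧ ∀ C ∈ Peb G, C ≠ ClauseOf G v → clauseSat a C

lemma mem_preds {G : PGraph} {u v : ℕ} : u ∈ preds G v ↔ (u, v) ∈ G.edges := by
  simp only [preds, Finset.mem_image, Finset.mem_filter]
  constructor
  · rintro ⟨⟨a, b⟩, ⟨h, rfl⟩, rfl⟩; exact h
  · intro h; exact ⟨(u, v), ⟨h, rfl⟩, rfl⟩

lemma exists_critical (G : PGraph) (hG : IsPointed G) {v : ℕ} (hv : v ∈ G.verts) :
    ∃ a : ℕ → Bool, IsCritical G v a := by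
  classical
  refine ⟨fun u => !(decide (Reach G v u)), ?_, ?_⟩
  · rintro ⟨l, hl, hval⟩
    rcases Finset.mem_union.mp hl with h | h
    · rcases Finset.mem_image.mp h with ⟨u, hu, rfl⟩
      have hval' : Relation.ReflTransGen (edgeRel G) v u := (by simpa using hval : Reach G v u)
      exact hG.2.2.1 v (Relation.TransGen.tail' hval' (mem_preds.mp hu))
    · by_cases hs : v = G.sink
      · simp [hs] at h
      · rw [if_neg hs, Finset.mem_singleton] at h
        subst h
        simp [Reach] at hval
        exact (of_decide_eq_false hval) Relation.ReflTransGen.refl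
  · rintro C ⟨w, hw, rfl⟩ hne
    have hwv : w ≠ v := by rintro rfl; exact hne rfl
    by_cases hr : Reach G v w
    · rcases hr.cases_tail with h | ⟨u, hvu, huw⟩
      · exact absurd h hwv
      · refine ⟨(u, false), ?_, ?_⟩
        · exact Finset.mem_union_left _ (Finset.mem_image.mpr ⟨u, mem_preds.mpr huw, rfl⟩)
        · have hvu' : Reach G v u := hvu; simpa using hvu'
    · have hws : w ≠ G.sink := by
        rintro rfl; exact hr (hG.2.2.2.2 v hv)
      refine ⟨(w, true), ?_, ?_⟩
      · exact Finset.mem_union_right _ (by simp [hws])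
      · simpa using hr

noncomputable def dRank (G : PGraph) (v : ℕ) : ℕ :=
  (G.verts.filter (fun u => Reach G u v)).card

lemma dRank_lt {G : PGraph} (hG : IsPointed G) {u v : ℕ} (h : (u, v) ∈ G.edges) :
    dRank G u < dRank G v := by
  apply Finset.card_lt_card
  constructor
  · intro w hw
    rcases Finset.mem_filter.mp hw with ⟨hw1, hw2⟩
    exact Finset.mem_filter.mpr ⟨hw1, hw2.tail h⟩
  · intro hsub
    have hv : v ∈ G.verts := (hG.2.1 _ h).2
    have : v ∈ G.verts.filter (fun u' => Reach G u' v) :=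
      Finset.mem_filter.mpr ⟨hv, Relation.ReflTransGen.refl⟩
    have hvu := Finset.mem_filter.mp (hsub this)
    exact hG.2.2.1 v (Relation.TransGen.tail' hvu.2 h)

lemma strat (G : PGraph) (hG : IsPointed G) :
    ∀ n (S : Finset ℕ), S.card = n → S ⊆ G.verts → (∀ w ∈ S, preds G w ⊆ S) →
    ∃ L : List (Finset ℕ), L ≠ [] ∧ L.head? = some ∅ ∧ L.getLast? = some S ∧
      List.Chain' (PebStep G) L ∧ ∀ C ∈ L, C ⊆ S := by
  intro n
  induction n using Nat.strong_induction_on with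
  | _ n ih =>
    intro S hcard hsub hcl
    rcases S.eq_empty_or_nonempty with rfl | hne
    · exact ⟨[∅], by simp, rfl, rfl, List.isChain_singleton _, by simp⟩
    · obtain ⟨v, hvS, hvmax⟩ := S.exists_max_image (dRank G) hne
      set S' := S.erase v with hS'
      have hcard' : S'.card < n := by
        rw [← hcard]; exact Finset.card_erase_lt_of_mem hvS
      have hsub' : S' ⊆ G.verts := (Finset.erase_subset _ _).trans hsub
      have hcl' : ∀ w ∈ S', preds G w ⊆ S' := by
        intro w hw u hu
        have hwS : w ∈ S := Finset.mem_of_mem_erase hw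
        have huS : u ∈ S := hcl w hwS hu
        refine Finset.mem_erase.mpr ⟨?_, huS⟩
        rintro rfl
        have := dRank_lt hG (mem_preds.mp hu)
        exact absurd (hvmax w hwS) (by omega)
      obtain ⟨L', hL'ne, hhead, hlast, hchain, hmem⟩ := ih _ hcard' S' rfl hsub' hcl'
      refine ⟨L' ++ [S], by simp, ?_, ?_, ?_, ?_⟩
      · rcases L' with _ | ⟨a, t⟩
        · exact absurd rfl hL'ne
        · simpa using hhead
      · simp [List.getLast?_concat]
      · show List.IsChain (PebStep G) (L' ++ [S]); rw [List.isChain_append]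
        refine ⟨hchain, List.isChain_singleton _, ?_⟩
        intro x hx y hy
        rw [hlast] at hx
        simp only [List.head?_cons, Option.mem_some_iff] at hx hy
        subst hx; subst hy
        left
        refine ⟨v, hsub hvS, ?_, ?_⟩
        · intro u hu
          refine Finset.mem_erase.mpr ⟨?_, hcl v hvS hu⟩
          rintro rfl
          exact hG.2.2.1 _ (Relation.TransGen.single (mem_preds.mp hu))
        · rw [Finset.insert_erase hvS]
      · intro C hC
        rcases List.mem_append.mp hC with h | h
        · exact (hmem C h).trans (Finset.erase_subset _ _)
        · simp only [List.mem_singleton] at h; subst h; rfl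

lemma cost_le {L : List (Finset ℕ)} {p : ℕ} (h : ∀ C ∈ L, C.card ≤ p) : cost L ≤ p := by
  induction L with
  | nil => simp [cost]
  | cons a l ihl =>
    simp only [cost, List.map_cons, List.foldr_cons]
    refine max_le (h a (by simp)) ?_
    exact ihl (fun C hC => h C (by simp [hC]))

lemma pebNum_le_card (G : PGraph) (hG : IsPointed G) : pebNum G ≤ G.verts.card := by
  obtain ⟨L, hLne, hhead, hlast, hchain, hmem⟩ :=
    strat G hG G.verts.card G.verts rfl (Finset.Subset.refl _)
      (fun w _ u hu => (hG.2.1 _ (mem_preds.mp hu)).1)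
  apply Nat.sInf_le
  refine ⟨L, ⟨hhead, ⟨G.verts, hlast, hG.1⟩, hchain⟩, ?_⟩
  exact cost_le (fun C hC => Finset.card_le_card (hmem C hC))

/-- If G is a pointed graph with pebbling number p, then at least p vertices of G
admit a v-critical assignment for Peb(G); in particular G has at least p vertices. -/
theorem critical_assignments_count (G : PGraph) (hG : IsPointed G) :
    pebNum G ≤ (G.verts.filter (fun v => ∃ a : ℕ → Bool, IsCritical G v a)).card ∧
    pebNum G ≤ G.verts.card := by
  have hfilter : G.verts.filter (fun v => ∃ a : ℕ → Bool, IsCritical G v a) = G.verts :=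
    Finset.filter_eq_self.mpr (fun v hv => exists_critical G hG hv)
  rw [hfilter]
  exact ⟨pebNum_le_card G hG, pebNum_le_card G hG⟩
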